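/- Let Φ : ℝ^d → [0,∞) be an N_∞ function. Every sequence (u_n) in W^1L^Φ([0,T],ℝ^d) with sup_n ‖u_n‖_{W^1L^Φ} < ∞ has a subsequence that converges uniformly on [0,T] to some continuous function u : [0,T] → ℝ^d. -/

import Mathlib

open MeasureTheory Filter Set
open scoped ENNReal RealInnerProductSpace Topology

noncomputable section

/-- `ℝ^d` with the euclidean norm. -/
abbrev Ed (d : ℕ) : Type := EuclideanSpace ℝ (Fin d)

/-- `Φ` is an `N_∞` function: differentiable, convex, nonnegative, vanishing exactly at `0`,
even, and superlinear at infinity. -/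
def IsNInf {m : ℕ} (Φ : Ed m → ℝ) : Prop :=
  Differentiable ℝ Φ ∧ ConvexOn ℝ Set.univ Φ ∧ (∀ y, 0 ≤ Φ y) ∧ Φ 0 = 0 ∧
    (∀ y, y ≠ 0 → 0 < Φ y) ∧ (∀ y, Φ (-y) = Φ y) ∧
    Tendsto (fun y => Φ y / ‖y‖) (comap (fun y : Ed m => ‖y‖) atTop) atTop

variable {d : ℕ}

/-- The modular `ρ_Φ(u) = ∫_0^T Φ(u(t)) dt`, as an extended nonnegative real. -/
def rhoE (T : ℝ) (Φ : Ed d → ℝ) (u : ℝ → Ed d) : ℝ≥0∞ :=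
  ∫⁻ t in Icc (0:ℝ) T, ENNReal.ofReal (Φ (u t))

/-- `u ∈ L^Φ([0,T], ℝ^d)`. -/
def MemLphi (T : ℝ) (Φ : Ed d → ℝ) (u : ℝ → Ed d) : Prop :=
  AEMeasurable u (volume.restrict (Icc (0:ℝ) T)) ∧
    ∃ l : ℝ, 0 < l ∧ rhoE T Φ (fun t => l • u t) < ⊤

/-- The Luxemburg norm of `u` on `[0,T]`. -/
def luxNorm (T : ℝ) (Φ : Ed d → ℝ) (u : ℝ → Ed d) : ℝ :=
  sInf {l : ℝ | 0 < l ∧ rhoE T Φ (fun t => l⁻¹ • u t) ≤ 1}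

/-- `u ∈ W^1L^Φ([0,T], ℝ^d)` with a.e. derivative `u'` : `u` is absolutely continuous,
being the integral of the (integrable) function `u'`, and `u' ∈ L^Φ`. -/
def MemW1Lphi (T : ℝ) (Φ : Ed d → ℝ) (u u' : ℝ → Ed d) : Prop :=
  IntegrableOn u' (Icc (0:ℝ) T) ∧ MemLphi T Φ u' ∧
    ∀ t ∈ Icc (0:ℝ) T, u t = u 0 + ∫ s in (0:ℝ)..t, u' s

/-- convexity through 0 -/
lemma phi_smul_le {Φ : Ed d → ℝ} (hconv : ConvexOn ℝ Set.univ Φ) (h0 : Φ 0 = 0)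
    {a : ℝ} (ha0 : 0 ≤ a) (ha1 : a ≤ 1) (y : Ed d) : Φ (a • y) ≤ a * Φ y := by
  have := hconv.2 (mem_univ y) (mem_univ (0 : Ed d)) ha0 (by linarith : (0:ℝ) ≤ 1 - a)
    (by ring)
  simpa [h0] using this

lemma phi_smul_le' {Φ : Ed d → ℝ} (hconv : ConvexOn ℝ Set.univ Φ) (h0 : Φ 0 = 0)
    (hpos : ∀ y, 0 ≤ Φ y) {a : ℝ} (ha0 : 0 ≤ a) (ha1 : a ≤ 1) (y : Ed d) :
    Φ (a • y) ≤ Φ y := by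
  calc Φ (a • y) ≤ a * Φ y := phi_smul_le hconv h0 ha0 ha1 y
    _ ≤ 1 * Φ y := by nlinarith [hpos y]
    _ = Φ y := one_mul _

lemma rhoE_smul_le {T : ℝ} {Φ : Ed d → ℝ} (hconv : ConvexOn ℝ Set.univ Φ) (h0 : Φ 0 = 0)
    {a : ℝ} (ha0 : 0 ≤ a) (ha1 : a ≤ 1) (w : ℝ → Ed d) :
    rhoE T Φ (fun t => a • w t) ≤ ENNReal.ofReal a * rhoE T Φ w := by
  unfold rhoE
  rw [← lintegral_const_mul' _ _ ENNReal.ofReal_ne_top]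
  refine lintegral_mono fun t => ?_
  rw [← ENNReal.ofReal_mul ha0]
  exact ENNReal.ofReal_le_ofReal (phi_smul_le hconv h0 ha0 ha1 _)

lemma lux_set_nonempty_of_mem {T : ℝ} {Φ : Ed d → ℝ} (hconv : ConvexOn ℝ Set.univ Φ)
    (h0 : Φ 0 = 0) {v : ℝ → Ed d} (h : MemLphi T Φ v) :
    {l : ℝ | 0 < l ∧ rhoE T Φ (fun t => l⁻¹ • v t) ≤ 1}.Nonempty := by
  obtain ⟨-, l₀, hl₀, hfin⟩ := h
  set A : ℝ≥0∞ := rhoE T Φ (fun t => l₀ • v t) with hA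
  set a : ℝ := min 1 ((A.toReal + 1)⁻¹) with ha
  have hA0 : 0 ≤ A.toReal := ENNReal.toReal_nonneg
  have ha0 : 0 < a := lt_min one_pos (by positivity)
  have ha1 : a ≤ 1 := min_le_left _ _
  refine ⟨(a * l₀)⁻¹, by positivity, ?_⟩
  have h1 : rhoE T Φ (fun t => ((a * l₀)⁻¹)⁻¹ • v t) = rhoE T Φ (fun t => a • (l₀ • v t)) := by
    simp [smul_smul, inv_inv]
  rw [h1]
  calc rhoE T Φ (fun t => a • (l₀ • v t)) ≤ ENNReal.ofReal a * A :=
        rhoE_smul_le hconv h0 ha0.le ha1 _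
    _ ≤ 1 := by
        rw [← ENNReal.ofReal_toReal hfin.ne, ← ENNReal.ofReal_mul ha0.le,
          ← ENNReal.ofReal_one]
        apply ENNReal.ofReal_le_ofReal
        have hale : a ≤ (A.toReal + 1)⁻¹ := min_le_right _ _
        have h2 : (A.toReal + 1)⁻¹ * (A.toReal + 1) = 1 := by
          field_simp
        nlinarith [inv_nonneg.mpr (by linarith : (0:ℝ) ≤ A.toReal + 1)]

lemma luxNorm_nonneg {T : ℝ} {Φ : Ed d → ℝ} (v : ℝ → Ed d) : 0 ≤ luxNorm T Φ v :=
  Real.sInf_nonneg fun _ hl => hl.1.le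

lemma modular_le_one {T : ℝ} {Φ : Ed d → ℝ} (hconv : ConvexOn ℝ Set.univ Φ) (h0 : Φ 0 = 0)
    (hpos : ∀ y, 0 ≤ Φ y) {v : ℝ → Ed d}
    (hne : {l : ℝ | 0 < l ∧ rhoE T Φ (fun t => l⁻¹ • v t) ≤ 1}.Nonempty)
    {B : ℝ} (hB : luxNorm T Φ v < B) :
    rhoE T Φ (fun t => B⁻¹ • v t) ≤ 1 := by
  obtain ⟨l, ⟨hl0, hl1⟩, hlB⟩ := exists_lt_of_csInf_lt hne hB
  have hB0 : 0 < B := hl0.trans hlB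
  calc rhoE T Φ (fun t => B⁻¹ • v t) ≤ rhoE T Φ (fun t => l⁻¹ • v t) := by
        refine lintegral_mono fun t => ENNReal.ofReal_le_ofReal ?_
        show Φ (B⁻¹ • v t) ≤ Φ (l⁻¹ • v t)
        have key : B⁻¹ • v t = (l / B) • (l⁻¹ • v t) := by
          rw [smul_smul]; congr 1; field_simp
        rw [key]
        exact phi_smul_le' hconv h0 hpos (by positivity)
          ((div_le_one hB0).mpr hlB.le) _
    _ ≤ 1 := hl1

lemma exists_coercive {Φ : Ed d → ℝ}
    (h : Tendsto (fun y => Φ y / ‖y‖) (comap (fun y : Ed d => ‖y‖) atTop) atTop)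
    (K : ℝ) : ∃ R : ℝ, 1 ≤ R ∧ ∀ y : Ed d, R ≤ ‖y‖ → K * ‖y‖ ≤ Φ y := by
  have h1 : ∀ᶠ y in comap (fun y : Ed d => ‖y‖) atTop, K ≤ Φ y / ‖y‖ :=
    h.eventually (eventually_ge_atTop K)
  rw [eventually_comap] at h1
  obtain ⟨R₀, hR₀⟩ := eventually_atTop.mp h1
  refine ⟨max R₀ 1, le_max_right _ _, fun y hy => ?_⟩
  have hy1 : (1:ℝ) ≤ ‖y‖ := le_trans (le_max_right _ _) hy
  have := hR₀ ‖y‖ (le_trans (le_max_left _ _) hy) y rfl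
  calc K * ‖y‖ ≤ (Φ y / ‖y‖) * ‖y‖ := by nlinarith
    _ = Φ y := by field_simp

lemma integral_norm_le {T : ℝ} {Φ : Ed d → ℝ} (hΦc : Continuous Φ) (hpos : ∀ y, 0 ≤ Φ y)
    {v : ℝ → Ed d} (hvi : IntegrableOn v (Icc (0:ℝ) T))
    {B K R : ℝ} (hB : 0 < B) (hK : 0 < K) (hR : 0 ≤ R)
    (hcoer : ∀ y : Ed d, R ≤ ‖y‖ → K * ‖y‖ ≤ Φ y)
    (hmod : rhoE T Φ (fun t => B⁻¹ • v t) ≤ 1)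
    {s t : ℝ} (hs : 0 ≤ s) (hst : s ≤ t) (ht : t ≤ T) :
    ∫ τ in s..t, ‖v τ‖ ≤ B * R * (t - s) + B / K := by
  have hsub : Ioc s t ⊆ Icc (0:ℝ) T := fun x hx => ⟨hs.trans hx.1.le, hx.2.trans ht⟩
  set g : ℝ → ℝ := fun τ => Φ (B⁻¹ • v τ) with hg
  have hvI : IntegrableOn v (Ioc s t) := hvi.mono_set hsub
  have hgm : AEStronglyMeasurable g (volume.restrict (Ioc s t)) :=
    hΦc.comp_aestronglyMeasurable (hvI.aestronglyMeasurable.const_smul B⁻¹)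
  have hlint : ∫⁻ τ in Ioc s t, ENNReal.ofReal (g τ) ≤ 1 :=
    le_trans (lintegral_mono_set hsub) hmod
  have hgint : IntegrableOn g (Ioc s t) :=
    ⟨hgm, (hasFiniteIntegral_iff_ofReal (Eventually.of_forall fun τ => hpos _)).mpr
      (lt_of_le_of_lt hlint ENNReal.one_lt_top)⟩
  have hgle : ∫ τ in Ioc s t, g τ ≤ 1 := by
    rw [integral_eq_lintegral_of_nonneg_ae (Eventually.of_forall fun τ => hpos _) hgm]
    calc (∫⁻ τ in Ioc s t, ENNReal.ofReal (g τ)).toReal ≤ (1 : ℝ≥0∞).toReal :=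
          ENNReal.toReal_mono ENNReal.one_ne_top hlint
      _ = 1 := ENNReal.toReal_one
  have hpt : ∀ τ, ‖v τ‖ ≤ B * R + (B / K) * g τ := by
    intro τ
    have hn : ‖B⁻¹ • v τ‖ = B⁻¹ * ‖v τ‖ := by
      rw [norm_smul, Real.norm_eq_abs, abs_of_pos (inv_pos.mpr hB)]
    by_cases hc : R ≤ ‖B⁻¹ • v τ‖
    · have h1 := hcoer _ hc
      rw [hn] at h1
      have h2 := mul_le_mul_of_nonneg_left h1 (by positivity : (0:ℝ) ≤ B / K)
      have h3 : (B / K) * (K * (B⁻¹ * ‖v τ‖)) = ‖v τ‖ := by field_simp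
      rw [h3] at h2
      have := mul_nonneg hB.le hR
      linarith
    · push_neg at hc
      rw [hn] at hc
      have h1 : ‖v τ‖ ≤ B * R := by
        have := mul_le_mul_of_nonneg_left hc.le hB.le
        calc ‖v τ‖ = B * (B⁻¹ * ‖v τ‖) := by field_simp
          _ ≤ B * R := this
      have h2 : 0 ≤ (B / K) * g τ := mul_nonneg (by positivity) (hpos _)
      linarith
  have hconst : IntegrableOn (fun _ : ℝ => B * R) (Ioc s t) :=
    integrableOn_const measure_Ioc_lt_top.ne
  rw [intervalIntegral.integral_of_le hst]
  calc ∫ τ in Ioc s t, ‖v τ‖ ≤ ∫ τ in Ioc s t, (B * R + (B / K) * g τ) :=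
        setIntegral_mono_on hvI.norm (hconst.add (hgint.const_mul _))
          measurableSet_Ioc (fun τ _ => hpt τ)
    _ = B * R * (t - s) + (B / K) * ∫ τ in Ioc s t, g τ := by
        rw [integral_add hconst (hgint.const_mul _), MeasureTheory.integral_const_mul,
          setIntegral_const, measureReal_def, Real.volume_Ioc, ENNReal.toReal_ofReal (sub_nonneg.mpr hst),
          smul_eq_mul, MeasureTheory.integral_const_mul]
        ring
    _ ≤ B * R * (t - s) + (B / K) * 1 := by
        have := mul_le_mul_of_nonneg_left hgle (by positivity : (0:ℝ) ≤ B / K)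
        linarith
    _ = B * R * (t - s) + B / K := by rw [mul_one]


set_option synthInstance.maxHeartbeats 1000000 in
/-- Every sequence in `W^1L^Φ([0,T],ℝ^d)` that is bounded in the norm
`‖u‖_{L^Φ} + ‖u'‖_{L^Φ}` has a subsequence converging uniformly on `[0,T]` to a
continuous function. -/
theorem statement6 {d : ℕ} (T : ℝ) (hT : 0 < T) (Φ : Ed d → ℝ) (hΦ : IsNInf Φ)
    (u u' : ℕ → ℝ → Ed d) (hu : ∀ n, MemW1Lphi T Φ (u n) (u' n))
    (C : ℝ) (hC : ∀ n, luxNorm T Φ (u n) + luxNorm T Φ (u' n) ≤ C) :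
    ∃ φ : ℕ → ℕ, StrictMono φ ∧ ∃ f : ℝ → Ed d, ContinuousOn f (Icc (0:ℝ) T) ∧
      TendstoUniformlyOn (fun k => u (φ k)) f atTop (Icc (0:ℝ) T) := by
  obtain ⟨hdiff, hconv, hpos, h0, -, -, hsuper⟩ := hΦ
  have hΦc : Continuous Φ := hdiff.continuous
  -- basic constants
  have hC0 : 0 ≤ C := le_trans (add_nonneg (luxNorm_nonneg _) (luxNorm_nonneg _)) (hC 0)
  obtain ⟨B, hBdef⟩ : ∃ B : ℝ, B = C + 1 := ⟨_, rfl⟩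
  have hB : 0 < B := by rw [hBdef]; positivity
  -- continuity of each u n on [0,T]
  have cont : ∀ n, ContinuousOn (u n) (Icc (0:ℝ) T) := by
    intro n
    have h1 : IntegrableOn (u' n) (uIcc (0:ℝ) T) := by
      rw [uIcc_of_le hT.le]; exact (hu n).1
    have h2 := intervalIntegral.continuousOn_primitive_interval h1
    rw [uIcc_of_le hT.le] at h2
    exact (continuousOn_const.add h2).congr fun t ht => (hu n).2.2 t ht
  -- Luxemburg sets are nonempty
  have Su' : ∀ n, {l : ℝ | 0 < l ∧ rhoE T Φ (fun t => l⁻¹ • u' n t) ≤ 1}.Nonempty :=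
    fun n => lux_set_nonempty_of_mem hconv h0 (hu n).2.1
  have Su : ∀ n, {l : ℝ | 0 < l ∧ rhoE T Φ (fun t => l⁻¹ • u n t) ≤ 1}.Nonempty := by
    intro n
    obtain ⟨M₀, hM₀⟩ := isCompact_Icc.exists_bound_of_continuousOn
      (hΦc.comp_continuousOn (cont n))
    set M₁ : ℝ := max M₀ 0 with hM₁
    have hM₁0 : 0 ≤ M₁ := le_max_right _ _
    set l : ℝ := max 1 (M₁ * T) with hl
    have hl0 : 0 < l := lt_of_lt_of_le one_pos (le_max_left _ _)
    refine ⟨l, hl0, ?_⟩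
    have hinv : 0 < l⁻¹ := inv_pos.mpr hl0
    have hinv1 : l⁻¹ ≤ 1 := by
      exact inv_le_one_of_one_le₀ (le_max_left _ _)
    calc rhoE T Φ (fun t => l⁻¹ • u n t)
        ≤ ∫⁻ _ in Icc (0:ℝ) T, ENNReal.ofReal (l⁻¹ * M₁) := by
          refine lintegral_mono_ae ?_
          refine (ae_restrict_iff' measurableSet_Icc).mpr (Eventually.of_forall fun t ht => ?_)
          refine ENNReal.ofReal_le_ofReal ?_
          calc Φ (l⁻¹ • u n t) ≤ l⁻¹ * Φ (u n t) := phi_smul_le hconv h0 hinv.le hinv1 _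
            _ ≤ l⁻¹ * M₁ := by
                have h1 : Φ (u n t) ≤ M₁ := le_trans (le_abs_self _)
                  (le_trans (hM₀ t ht) (le_max_left _ _))
                exact mul_le_mul_of_nonneg_left h1 hinv.le
      _ = ENNReal.ofReal (l⁻¹ * M₁) * ENNReal.ofReal T := by
          rw [setLIntegral_const, Real.volume_Icc, sub_zero]
      _ ≤ 1 := by
          rw [← ENNReal.ofReal_mul (by positivity), ← ENNReal.ofReal_one]
          apply ENNReal.ofReal_le_ofReal
          have h1 : M₁ * T ≤ l := le_max_right _ _
          rw [mul_assoc, inv_mul_le_iff₀ hl0, mul_one]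
          exact h1
  -- modular bounds
  have hmodu : ∀ n, rhoE T Φ (fun t => B⁻¹ • u n t) ≤ 1 := by
    intro n
    refine modular_le_one hconv h0 hpos (Su n) ?_
    have := hC n; have := luxNorm_nonneg (T := T) (Φ := Φ) (u' n); linarith
  have hmodu' : ∀ n, rhoE T Φ (fun t => B⁻¹ • u' n t) ≤ 1 := by
    intro n
    refine modular_le_one hconv h0 hpos (Su' n) ?_
    have := hC n; have := luxNorm_nonneg (T := T) (Φ := Φ) (u n); linarith
  -- oscillation bound
  have osc : ∀ K R : ℝ, 0 < K → 0 ≤ R → (∀ y : Ed d, R ≤ ‖y‖ → K * ‖y‖ ≤ Φ y) →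
      ∀ n, ∀ s ∈ Icc (0:ℝ) T, ∀ t ∈ Icc (0:ℝ) T, s ≤ t →
      ‖u n t - u n s‖ ≤ B * R * (t - s) + B / K := by
    intro K R hK hR hcoer n s hs t ht hst
    have hii : ∀ r, r ∈ Icc (0:ℝ) T → IntervalIntegrable (u' n) volume 0 r := by
      intro r hr
      refine IntegrableOn.intervalIntegrable ?_
      rw [uIcc_of_le hr.1]
      exact (hu n).1.mono_set (Icc_subset_Icc le_rfl hr.2)
    have hdiffeq : u n t - u n s = ∫ τ in s..t, u' n τ := by
      rw [(hu n).2.2 t ht, (hu n).2.2 s hs]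
      rw [add_sub_add_left_eq_sub]
      exact intervalIntegral.integral_interval_sub_left (hii t ht) (hii s hs)
    rw [hdiffeq]
    calc ‖∫ τ in s..t, u' n τ‖ ≤ ∫ τ in s..t, ‖u' n τ‖ :=
          intervalIntegral.norm_integral_le_integral_norm hst
      _ ≤ B * R * (t - s) + B / K :=
          integral_norm_le hΦc hpos (hu n).1 hB hK hR hcoer (hmodu' n) hs.1 hst ht.2
  -- uniform equicontinuity
  have key : ∀ ε : ℝ, 0 < ε → ∃ δ : ℝ, 0 < δ ∧ ∀ n, ∀ s ∈ Icc (0:ℝ) T, ∀ t ∈ Icc (0:ℝ) T,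
      dist s t < δ → dist (u n s) (u n t) < ε := by
    intro ε hε
    obtain ⟨K, hKdef⟩ : ∃ K : ℝ, K = 2 * B / ε := ⟨_, rfl⟩
    have hK : 0 < K := by rw [hKdef]; positivity
    obtain ⟨R, hR1, hcoer⟩ := exists_coercive hsuper K
    have hR0 : 0 ≤ R := le_trans zero_le_one hR1
    obtain ⟨δ, hδdef⟩ : ∃ δ : ℝ, δ = ε / (2 * (B * R + 1)) := ⟨_, rfl⟩
    have hBR : 0 < B * R + 1 := by positivity
    have hδ : 0 < δ := by rw [hδdef]; positivity
    refine ⟨δ, hδ, fun n s hs t ht hd => ?_⟩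
    have hBK : B / K = ε / 2 := by
      rw [hKdef]; field_simp
    -- wlog s ≤ t
    have main : ∀ s' t' : ℝ, s' ∈ Icc (0:ℝ) T → t' ∈ Icc (0:ℝ) T → s' ≤ t' →
        t' - s' < δ → dist (u n s') (u n t') < ε := by
      intro s' t' hs' ht' h1 h2
      rw [dist_eq_norm, norm_sub_rev]
      calc ‖u n t' - u n s'‖ ≤ B * R * (t' - s') + B / K :=
            osc K R hK hR0 hcoer n s' hs' t' ht' h1
        _ ≤ B * R * δ + ε / 2 := by
            have h3 : B * R * (t' - s') ≤ B * R * δ :=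
              mul_le_mul_of_nonneg_left h2.le (by positivity)
            linarith [hBK]
        _ < ε := by
            have h5 : B * R * δ < (B * R + 1) * δ := by nlinarith
            have h6 : (B * R + 1) * δ = ε / 2 := by
              rw [hδdef]; field_simp
            linarith
    rcases le_total s t with h | h
    · exact main s t hs ht h (by rw [dist_comm] at hd; calc t - s ≤ |t - s| := le_abs_self _
        _ = dist t s := (Real.dist_eq t s).symm
        _ < δ := hd)
    · rw [dist_comm]
      exact main t s ht hs h (by calc s - t ≤ |s - t| := le_abs_self _
        _ = dist s t := (Real.dist_eq s t).symm
        _ < δ := hd)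
  -- uniform bound
  obtain ⟨R₁, hR₁1, hcoer₁⟩ := exists_coercive hsuper 1
  have hR₁0 : 0 ≤ R₁ := le_trans zero_le_one hR₁1
  obtain ⟨M, hM⟩ : ∃ M : ℝ, M = B * R₁ * T + B := ⟨_, rfl⟩
  have hoscM : ∀ n, ∀ t ∈ Icc (0:ℝ) T, ‖u n t - u n 0‖ ≤ M := by
    intro n t ht
    have h1 := osc 1 R₁ one_pos hR₁0 hcoer₁ n 0 (left_mem_Icc.mpr hT.le) t ht ht.1
    have h2 : B * R₁ * (t - 0) ≤ B * R₁ * T := by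
      have := mul_le_mul_of_nonneg_left (by linarith [ht.2] : t - 0 ≤ T)
        (by positivity : (0:ℝ) ≤ B * R₁)
      linarith
    have h3 : B / 1 = B := div_one B
    rw [hM]
    linarith
  obtain ⟨D, hD⟩ : ∃ D : ℝ, D = M + B * R₁ + 2 * B / T := ⟨_, rfl⟩
  have hbound0 : ∀ n, ‖u n 0‖ ≤ D := by
    intro n
    by_contra hcon
    push_neg at hcon
    have hlow : ∀ t ∈ Icc (0:ℝ) T, (2:ℝ)/T ≤ Φ (B⁻¹ • u n t) := by
      intro t ht
      have h1 : ‖u n 0‖ - M ≤ ‖u n t‖ := by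
        have h2 := hoscM n t ht
        have h3 := norm_sub_norm_le (u n 0) (u n t)
        rw [norm_sub_rev] at h2
        linarith
      have h2T : 0 ≤ 2 * B / T := by positivity
      have h2 : B * R₁ + 2 * B / T < ‖u n t‖ := by
        rw [hD] at hcon; linarith
      have h3 : R₁ + 2/T ≤ ‖B⁻¹ • u n t‖ := by
        have hn : ‖B⁻¹ • u n t‖ = B⁻¹ * ‖u n t‖ := by
          rw [norm_smul, Real.norm_eq_abs, abs_of_pos (inv_pos.mpr hB)]
        rw [hn]
        have he : B⁻¹ * (B * R₁ + 2 * B / T) = R₁ + 2/T := by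
          field_simp
        rw [← he]
        exact mul_le_mul_of_nonneg_left h2.le (inv_pos.mpr hB).le
      have h2T' : (0:ℝ) ≤ 2 / T := by positivity
      have h4 := hcoer₁ _ (le_trans (by linarith : R₁ ≤ R₁ + 2/T) h3)
      rw [one_mul] at h4
      linarith
    have h5 : (2:ℝ≥0∞) ≤ rhoE T Φ (fun t => B⁻¹ • u n t) := by
      have h6 : ∫⁻ _ in Icc (0:ℝ) T, ENNReal.ofReal ((2:ℝ)/T)
          ≤ rhoE T Φ (fun t => B⁻¹ • u n t) :=
        lintegral_mono_ae ((ae_restrict_iff' measurableSet_Icc).mpr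
          (Eventually.of_forall fun t ht => ENNReal.ofReal_le_ofReal (hlow t ht)))
      rw [setLIntegral_const, Real.volume_Icc, sub_zero,
        ← ENNReal.ofReal_mul (by positivity)] at h6
      have he : (2:ℝ)/T * T = 2 := by field_simp
      rw [he] at h6
      calc (2:ℝ≥0∞) = ENNReal.ofReal 2 := by norm_num
        _ ≤ _ := h6
    have h7 := le_trans h5 (hmodu n)
    exact absurd h7 (by norm_num)
  have hboundall : ∀ n, ∀ t ∈ Icc (0:ℝ) T, ‖u n t‖ ≤ D + M := by
    intro n t ht
    have h1 := hoscM n t ht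
    have h2 := norm_le_insert' (u n t) (u n 0)
    have h3 := hbound0 n
    have h4 := norm_sub_norm_le (u n t) (u n 0)
    linarith
  -- Arzela-Ascoli
  set α := Icc (0:ℝ) T
  set F : ℕ → BoundedContinuousFunction α (Ed d) := fun n =>
    BoundedContinuousFunction.mkOfCompact ⟨α.restrict (u n), (cont n).restrict⟩ with hF
  have hFval : ∀ n (x : α), F n x = u n x := fun n x => rfl
  set A : Set (BoundedContinuousFunction α (Ed d)) := Set.range F with hA
  have in_s : ∀ (f : BoundedContinuousFunction α (Ed d)) (x : α), f ∈ A →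
      f x ∈ Metric.closedBall (0 : Ed d) (D + M) := by
    rintro f x ⟨n, rfl⟩
    rw [Metric.mem_closedBall, dist_zero_right, hFval]
    exact hboundall n x x.2
  have Hequi : Equicontinuous ((↑) : A → α → Ed d) := by
    intro x₀
    rw [Metric.equicontinuousAt_iff]
    intro ε hε
    obtain ⟨δ, hδ, hkey⟩ := key ε hε
    refine ⟨δ, hδ, fun x hx i => ?_⟩
    obtain ⟨n, hn⟩ := i.2
    have : (i : α → Ed d) = F n := by rw [hn]
    rw [this, hFval, hFval]
    exact hkey n x₀ x₀.2 x x.2 (by rwa [Subtype.dist_eq, dist_comm] at hx)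
  have hcompact : IsCompact (closure A) :=
    BoundedContinuousFunction.arzela_ascoli (Metric.closedBall (0 : Ed d) (D + M))
      (isCompact_closedBall _ _) A in_s Hequi
  obtain ⟨g, -, φ, hφ, hconv'⟩ :=
    hcompact.tendsto_subseq (fun n => subset_closure (mem_range_self (f := F) n))
  have hTU : TendstoUniformly (fun k => ⇑(F (φ k))) (⇑g) atTop :=
    BoundedContinuousFunction.tendsto_iff_tendstoUniformly.mp hconv'
  refine ⟨φ, hφ, fun t => if h : t ∈ Icc (0:ℝ) T then g ⟨t, h⟩ else 0, ?_, ?_⟩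
  · rw [continuousOn_iff_continuous_restrict]
    have hre : (Icc (0:ℝ) T).restrict
        (fun t => if h : t ∈ Icc (0:ℝ) T then g ⟨t, h⟩ else 0) = ⇑g := by
      funext x
      exact dif_pos (show (x:ℝ) ∈ Icc (0:ℝ) T from x.2)
    rw [show α.domRestrict (fun t => if h : t ∈ Icc (0:ℝ) T then g ⟨t, h⟩ else 0) = ⇑g from hre]
    exact g.continuous
  · rw [tendstoUniformlyOn_iff_tendstoUniformly_comp_coe]
    have h1 : (fun k (x : α) => u (φ k) x) = fun k => ⇑(F (φ k)) := by
      funext k x; exact (hFval (φ k) x).symm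
    have h2 : (fun t => if h : t ∈ Icc (0:ℝ) T then g ⟨t, h⟩ else 0) ∘
        (Subtype.val : α → ℝ) = ⇑g := by
      funext x
      exact dif_pos (show (x:ℝ) ∈ Icc (0:ℝ) T from x.2)
    rw [h1, h2]
    exact hTU
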